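/- Let S be a non-empty set and let T be the state monad on the category of sets arising from the adjunction (S × –) ⊣ (–)^S, so that T X = (S × X)^S. Then the functor U : Set → Set, X ↦ X^S, is monadic: the comparison functor K : Set → Alg^T, Y ↦ (Y^S, ε_Y^S), is an equivalence of categories. -/

import Mathlib

open CategoryTheory CategoryTheory.MonoidalCategory CategoryTheory.Limits
  CategoryTheory.CartesianMonoidalCategory

theorem stmt0 (S : Type u) (hS : Nonempty S) :
    (Monad.comparison (ihom.adjunction S)).IsEquivalence := by
  obtain ⟨s₀⟩ := hS
  set K := Monad.comparison (ihom.adjunction S) with hK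
  refine ⟨?_, ?_, ?_⟩
  · -- faithful
    constructor
    intro Y Z g g' h
    refine ConcreteCategory.hom_ext _ _ fun y => ?_
    have h2 : ((K.map g).f : (S ⟶ Y) ⟶ (S ⟶ Z)) = (K.map g').f := congrArg _ h
    have := congrArg (fun (φ : (S ⟶ Y) ⟶ (S ⟶ Z)) => (φ (↾fun _ => y) : S ⟶ Z) s₀) h2
    exact this
  · -- full
    constructor
    intro Y Z F
    have key : ∀ (u : S ⟶ Y) (s t : S), (show S ⟶ Z from F.f (↾fun _ => u s)) t
        = (show S ⟶ Z from F.f u) s := by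
      intro u s t
      have h1 := congrArg (fun φ => (φ (↾fun _ => (s, u)) : S ⟶ Z) t) F.h
      exact h1.symm
    refine ⟨↾fun y => (show S ⟶ Z from F.f (↾fun _ => y)) s₀, ?_⟩
    apply Monad.Algebra.Hom.ext
    refine ConcreteCategory.hom_ext _ _ fun u => ?_
    refine ConcreteCategory.hom_ext _ _ fun s => ?_
    exact key u s s₀
  · -- essentially surjective
    constructor
    intro A
    set a : (S ⟶ S × A.A) → A.A := fun Φ => A.a Φ with ha
    have hunit : ∀ x : A.A, a (↾fun s => (s, x)) = x := fun x =>
      congrArg (fun f : A.A ⟶ A.A => f x) A.unit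
    have hassoc : ∀ Φ : S ⟶ S × (S ⟶ S × A.A),
        a (↾fun s => ((Φ s).1, a ((Φ s).2))) = a (↾fun s => (Φ s).2 (Φ s).1) := by
      intro Φ
      exact (congrArg (fun f : _ ⟶ A.A => f Φ) A.assoc).symm
    set wr : S → A.A → A.A := fun s x => a (↾fun _ => (s, x)) with hwr
    have L1 : ∀ (t s : S) (x : A.A), wr t (wr s x) = wr s x := by
      intro t s x
      exact hassoc (↾fun _ => (t, ↾fun _ => (s, x)))
    refine ⟨{x : A.A // ∀ s, wr s x = x}, ⟨?_⟩⟩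
    set Y := {x : A.A // ∀ s, wr s x = x} with hY
    set β : (S ⟶ Y) → A.A := fun k => a (↾fun s => (s, (k s).1)) with hβ
    set α : A.A → (S ⟶ Y) := fun x => ↾fun s => ⟨wr s x, fun t => L1 t s x⟩ with hα
    have hβα : ∀ x, β (α x) = x := by
      intro x
      have := hassoc (↾fun s => (s, ↾fun _ => (s, x)))
      exact this.trans (hunit x)
    have hαβ : ∀ k, α (β k) = k := by
      intro k
      refine ConcreteCategory.hom_ext _ _ fun s => ?_
      apply Subtype.ext
      show wr s (β k) = (k s).1
      have h1 : wr s (β k) = wr s ((k s).1) :=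
        hassoc (↾fun _ => (s, ↾fun t => (t, (k t).1)))
      exact h1.trans ((k s).2 s)
    have L2 : ∀ (f : S → S) (c : S ⟶ Y),
        a (↾fun s => (f s, (c s).1)) = a (↾fun s => (s, (c s).1)) := by
      intro f c
      have inner : ∀ s, a (↾fun _ : S => (f s, (c s).1)) = (c s).1 := fun s => (c s).2 (f s)
      have h1 := hassoc (↾fun s => (s, ↾fun _ => (f s, (c s).1)))
      -- h1 : a (fun s => (s, a (fun _ => (f s, c s)))) = a (fun s => (f s, c s))
      refine h1.symm.trans ?_
      exact congrArg a (ConcreteCategory.hom_ext _ _ fun s => by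
        show (s, a (↾fun _ : S => (f s, (c s).1))) = (s, (c s).1)
        rw [inner s])
    have w : ∀ φ : S ⟶ S × (S ⟶ Y),
        a (↾fun s => ((φ s).1, β ((φ s).2))) = β (↾fun s => (φ s).2 (φ s).1) := by
      intro φ
      have h1 := hassoc (↾fun s => ((φ s).1, ↾fun t => (t, ((φ s).2 t).1)))
      -- h1 : LHS = a (fun s => ((φ s).1, ((φ s).2 (φ s).1).1))
      refine h1.trans ?_
      exact L2 (fun s => (φ s).1) (↾fun s => (φ s).2 (φ s).1)
    exact Monad.Algebra.isoMk
      { hom := ↾β, inv := ↾α, hom_inv_id := ConcreteCategory.hom_ext _ _ hαβ,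
        inv_hom_id := ConcreteCategory.hom_ext _ _ hβα }
      (ConcreteCategory.hom_ext _ _ fun φ => w φ)
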